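/- arXiv:1503.03128 — 2 statements merged into one kernel-verified Lean document; each statement's English description precedes it below -/
import Mathlib

section
/- Let G be the standard Gumbel distribution with CDF Λ(x) = exp(-e^{-x}) on ℝ. Then E[G] = γ, the Euler–Mascheroni constant. -/
open MeasureTheory
open Set
open scoped NNReal ENNReal

lemma integral_log_mul_exp_neg :
    ∫ t in Ioi (0:ℝ), Real.log t * Real.exp (-t) = -Real.eulerMascheroniConstant := by
  have h1 := Complex.hasDerivAt_GammaIntegral (s := 1) (by simp)
  have hD : (∫ t : ℝ in Ioi 0, (t : ℂ) ^ ((1:ℂ) - 1) * (Real.log t * Real.exp (-t)))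
      = ((∫ t in Ioi (0:ℝ), Real.log t * Real.exp (-t) : ℝ) : ℂ) := by
    simp only [sub_self, Complex.cpow_zero, one_mul, ← Complex.ofReal_mul]
    exact integral_ofReal
  rw [hD] at h1
  have h2 : HasDerivAt Complex.Gamma
      ((∫ t in Ioi (0:ℝ), Real.log t * Real.exp (-t) : ℝ) : ℂ) 1 := by
    refine h1.congr_of_eventuallyEq ?_
    have hmem : {s : ℂ | 0 < s.re} ∈ nhds (1 : ℂ) := by
      refine (Complex.continuous_re.isOpen_preimage _ isOpen_Ioi).mem_nhds ?_
      simp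
    filter_upwards [hmem] with s hs using Complex.Gamma_eq_integral hs
  have h3 := h2.real_of_complex
  have h4 : HasDerivAt Real.Gamma (∫ t in Ioi (0:ℝ), Real.log t * Real.exp (-t)) 1 := by
    exact h3
  have := h4.unique Real.hasDerivAt_Gamma_one
  linarith

lemma expIntegrable : IntegrableOn (fun t : ℝ => Real.exp (-t)) (Ioi 0) := by
  simpa using exp_neg_integrableOn_Ioi 0 (b := 1) one_pos

/-- The standard Gumbel distribution, with CDF `Λ(x) = exp(-e^{-x})`, has
expectation equal to the Euler–Mascheroni constant. -/
theorem gumbel_expectation {Ω : Type*} [MeasurableSpace Ω]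
    (μ : Measure Ω) [IsProbabilityMeasure μ]
    (G : Ω → ℝ) (hmeas : Measurable G)
    (hcdf : ∀ x : ℝ,
      μ {ω | G ω ≤ x} = ENNReal.ofReal (Real.exp (-Real.exp (-x)))) :
    ∫ ω, G ω ∂μ = Real.eulerMascheroniConstant := by
  set ρ : Measure ℝ :=
    (volume.restrict (Ioi 0)).withDensity (fun t => ENNReal.ofReal (Real.exp (-t))) with hρ
  have hmeas2 : Measurable fun t : ℝ => -Real.log t := Real.measurable_log.neg
  have hρIci : ∀ c : ℝ, 0 < c → ρ (Ici c) = ENNReal.ofReal (Real.exp (-c)) := by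
    intro c hc
    rw [hρ, withDensity_apply _ measurableSet_Ici, Measure.restrict_restrict measurableSet_Ici,
      show Ici c ∩ Ioi (0:ℝ) = Ici c from inter_eq_left.mpr fun t ht => lt_of_lt_of_le hc ht,
      ← restrict_Ioi_eq_restrict_Ici,
      ← ofReal_integral_eq_lintegral_ofReal
        (expIntegrable.mono_set (Ioi_subset_Ioi hc.le))
        (Filter.Eventually.of_forall fun t => (Real.exp_pos _).le),
      integral_exp_neg_Ioi]
  have hρprob : IsProbabilityMeasure ρ := by
    constructor
    rw [hρ, withDensity_apply _ MeasurableSet.univ, Measure.restrict_univ,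
      ← ofReal_integral_eq_lintegral_ofReal expIntegrable
        (Filter.Eventually.of_forall fun t => (Real.exp_pos _).le),
      integral_exp_neg_Ioi_zero, ENNReal.ofReal_one]
  have hmap : μ.map G = ρ.map (fun t => -Real.log t) := by
    have : IsProbabilityMeasure (μ.map G) := Measure.isProbabilityMeasure_map hmeas.aemeasurable
    refine Measure.ext_of_Iic _ _ (fun x => ?_)
    rw [Measure.map_apply hmeas measurableSet_Iic, Measure.map_apply hmeas2 measurableSet_Iic]
    have hpre : (fun t : ℝ => -Real.log t) ⁻¹' Iic x ∩ Ioi 0 = Ici (Real.exp (-x)) := by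
      ext t
      simp only [mem_inter_iff, mem_preimage, mem_Iic, mem_Ioi, mem_Ici, neg_le]
      constructor
      · rintro ⟨h1, h2⟩
        exact (Real.le_log_iff_exp_le h2).mp h1
      · intro h
        have ht : 0 < t := lt_of_lt_of_le (Real.exp_pos _) h
        exact ⟨(Real.le_log_iff_exp_le ht).mpr h, ht⟩
    have : ρ ((fun t : ℝ => -Real.log t) ⁻¹' Iic x) = ENNReal.ofReal (Real.exp (-Real.exp (-x))) := by
      rw [hρ, withDensity_apply _ (hmeas2 measurableSet_Iic),
        Measure.restrict_restrict (hmeas2 measurableSet_Iic), hpre]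
      rw [← restrict_Ioi_eq_restrict_Ici,
        ← ofReal_integral_eq_lintegral_ofReal
          (expIntegrable.mono_set (Ioi_subset_Ioi (Real.exp_pos (-x)).le))
          (Filter.Eventually.of_forall fun t => (Real.exp_pos _).le),
        integral_exp_neg_Ioi]
    rw [this, ← hcdf x]
    rfl
  have hid : (∫ ω, G ω ∂μ) = ∫ x, x ∂(μ.map G) :=
    (integral_map hmeas.aemeasurable aestronglyMeasurable_id).symm
  have hid2 : ∫ x, x ∂(ρ.map fun t => -Real.log t) = ∫ t, -Real.log t ∂ρ :=
    integral_map hmeas2.aemeasurable aestronglyMeasurable_id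
  rw [hid, hmap, hid2]
  have hwd : ρ = (volume.restrict (Ioi 0)).withDensity
      (fun t => ((Real.toNNReal (Real.exp (-t)) : ℝ≥0) : ℝ≥0∞)) := rfl
  rw [hwd, integral_withDensity_eq_integral_smul
    ((measurable_neg.exp.real_toNNReal : Measurable fun t : ℝ => Real.toNNReal (Real.exp (-t)))) _]
  have : ∀ t : ℝ, (Real.toNNReal (Real.exp (-t)) : ℝ≥0) • (-Real.log t)
      = -(Real.log t * Real.exp (-t)) := by
    intro t
    simp [NNReal.smul_def, Real.coe_toNNReal _ (Real.exp_nonneg _)]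
    ring
  rw [show (fun t : ℝ => (Real.toNNReal (Real.exp (-t)) : ℝ≥0) • (-Real.log t))
      = fun t : ℝ => -(Real.log t * Real.exp (-t)) from funext this]
  rw [integral_neg, integral_log_mul_exp_neg, neg_neg]
end

section
/- Fix α > 1, x_m > 0, p ∈ (0,1), n ≥ 1 and positive integer r. Define the relaunching normalizing constant a_0 = x_m (pn)^{1/((r+1)α)}, and let a_1 be the unique positive solution of n^{1/α} x_m^{r+1} = x_m p^{-1/α} a^r + a^{r+1}. Then x_m p^{-1/α} + Γ(1 - 1/((r+1)α))·a_1 ≥ x_m p^{-1/α} + Γ(1 - 1/((r+1)α))·a_0 (relaunching has lower asymptotic latency) if and only if p^{1/α} + (np)^{-1/((r+1)α)} ≤ 1. -/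
/-- Relaunching has lower asymptotic latency than no relaunching for
Pareto(α, x_m) execution times iff `p^{1/α} + (np)^{-1/((r+1)α)} ≤ 1`.
Here `a0 = x_m (pn)^{1/((r+1)α)}` is the relaunching normalizing constant and
`a1` is the positive solution of
`n^{1/α} x_m^{r+1} = x_m p^{-1/α} a^r + a^{r+1}`. -/
theorem relaunch_latency_comparison (α x_m p : ℝ) (n r : ℕ)
    (hα : 1 < α) (hxm : 0 < x_m) (hp0 : 0 < p) (hp1 : p < 1)
    (hn : 1 ≤ n) (hr : 0 < r)
    (a0 a1 : ℝ)
    (ha0 : a0 = x_m * (p * n) ^ (1 / (((r : ℝ) + 1) * α)))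
    (ha1pos : 0 < a1)
    (ha1 : (n : ℝ) ^ (1 / α) * x_m ^ (r + 1)
      = x_m * p ^ (-1 / α) * a1 ^ r + a1 ^ (r + 1)) :
    x_m * p ^ (-1 / α) + Real.Gamma (1 - 1 / (((r : ℝ) + 1) * α)) * a1
        ≥ x_m * p ^ (-1 / α) + Real.Gamma (1 - 1 / (((r : ℝ) + 1) * α)) * a0
      ↔ p ^ (1 / α) + ((n : ℝ) * p) ^ (-(1 / (((r : ℝ) + 1) * α))) ≤ 1 := by
  have hα0 : (0:ℝ) < α := by linarith
  have hr1 : (1:ℝ) ≤ (r:ℝ) := by exact_mod_cast hr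
  have hn0 : (0:ℝ) < (n:ℝ) := by exact_mod_cast Nat.lt_of_lt_of_le Nat.zero_lt_one hn
  have hrα : (0:ℝ) < ((r:ℝ)+1)*α := by nlinarith
  set β : ℝ := 1 / (((r : ℝ) + 1) * α) with hβdef
  have hβ : 0 < β := by positivity
  have hβ1 : β < 1 := by
    rw [hβdef, div_lt_one hrα]; nlinarith
  have hΓ : 0 < Real.Gamma (1 - β) := Real.Gamma_pos_of_pos (by linarith)
  have hpn : (0:ℝ) < p * n := mul_pos hp0 hn0
  set q : ℝ := (p * n) ^ β with hqdef
  have hq : 0 < q := Real.rpow_pos_of_pos hpn β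
  set s : ℝ := p ^ (1/α) with hsdef
  have hs : 0 < s := Real.rpow_pos_of_pos hp0 _
  have hpsinv : p ^ (-1/α) = s⁻¹ := by
    rw [hsdef, neg_div, Real.rpow_neg hp0.le]
  -- q^(r+1) = p^(1/α) * n^(1/α)
  have hqpow : q ^ (r+1) = s * (n:ℝ) ^ (1/α) := by
    rw [hqdef, ← Real.rpow_natCast ((p*n)^β) (r+1), ← Real.rpow_mul hpn.le]
    have : β * ((r:ℕ)+1 : ℕ) = 1/α := by
      push_cast [hβdef]
      field_simp
    rw [this, Real.mul_rpow hp0.le hn0.le, hsdef]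
  -- the key value N
  have hNval : (n:ℝ) ^ (1/α) * x_m ^ (r+1) = x_m ^ (r+1) * (s⁻¹ * q ^ (r+1)) := by
    rw [hqpow]
    field_simp
  have hc : 0 < x_m * p ^ (-1/α) := by
    rw [hpsinv]; positivity
  -- reduce latency comparison to a0 ≤ a1
  rw [ge_iff_le, add_le_add_iff_left, mul_le_mul_iff_right₀ hΓ]
  have ha0pos : 0 < a0 := by rw [ha0]; positivity
  -- a0 ≤ a1 ↔ f a0 ≤ f a1
  have step2 : a0 ≤ a1 ↔
      x_m * p ^ (-1/α) * a0 ^ r + a0 ^ (r+1) ≤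
      x_m * p ^ (-1/α) * a1 ^ r + a1 ^ (r+1) := by
    constructor
    · intro h
      gcongr <;> first | exact hc.le | exact ha0pos.le
    · intro h
      by_contra hcon
      push_neg at hcon
      have h1 : a1 ^ r < a0 ^ r := pow_lt_pow_left₀ hcon ha1pos.le hr.ne'
      have h2 : a1 ^ (r+1) < a0 ^ (r+1) := pow_lt_pow_left₀ hcon ha1pos.le (Nat.succ_ne_zero r)
      nlinarith
  rw [step2, ← ha1, hNval]
  -- now compute f a0
  have hfa0 : x_m * p ^ (-1/α) * a0 ^ r + a0 ^ (r+1)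
      = x_m ^ (r+1) * (q ^ r * (s⁻¹ + q)) := by
    rw [ha0, hpsinv, mul_pow, mul_pow, pow_succ]
    ring
  rw [hfa0]
  have hqr11 : s⁻¹ * q ^ (r+1) = q ^ r * (s⁻¹ * q) := by rw [pow_succ]; ring
  rw [hqr11, mul_le_mul_iff_right₀ (pow_pos hxm (r+1)), mul_le_mul_iff_right₀ (pow_pos hq r)]
  -- s⁻¹ + q ≤ s⁻¹ * q ↔ s + q⁻¹ ≤ 1
  have hnp : ((n:ℝ) * p) ^ (-β) = q⁻¹ := by
    rw [mul_comm (n:ℝ) p, Real.rpow_neg hpn.le]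
  rw [hnp]
  constructor
  · intro h
    have h2 := mul_le_mul_of_nonneg_left h (by positivity : (0:ℝ) ≤ s * q⁻¹)
    have e1 : s * q⁻¹ * (s⁻¹ + q) = q⁻¹ * (s * s⁻¹) + s * (q⁻¹ * q) := by ring
    have e2 : s * q⁻¹ * (s⁻¹ * q) = (s * s⁻¹) * (q⁻¹ * q) := by ring
    rw [e1, e2, mul_inv_cancel₀ hs.ne', inv_mul_cancel₀ hq.ne'] at h2
    linarith
  · intro h
    have h2 := mul_le_mul_of_nonneg_left h (by positivity : (0:ℝ) ≤ s⁻¹ * q)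
    have e1 : s⁻¹ * q * (s + q⁻¹) = q * (s⁻¹ * s) + s⁻¹ * (q * q⁻¹) := by ring
    rw [e1, inv_mul_cancel₀ hs.ne', mul_inv_cancel₀ hq.ne', mul_one] at h2
    linarith
end
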